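/- The subdifferential of g** is: ∂g**(x) = [−τ, τ] if x = 0; {sign(x)·τ} if 0 < |x| < μ; sign(x)·[τ, κ] ∩ ℝ if |x| = μ; and ∂h(x) if |x| > μ, where κ = sup{v ≥ 0 : v ∈ ∂h(μ)} when μ < +∞. -/

import Mathlib

noncomputable section

open Set
open scoped Classical

/-- Convex (Fenchel) conjugate of an extended-real-valued function on `ℝ`. -/
def conj (f : ℝ → EReal) (v : ℝ) : EReal := ⨆ x : ℝ, ((v * x : ℝ) : EReal) - f x

/-- Convex subdifferential of an extended-real-valued function on `ℝ`. -/
def subdiff (f : ℝ → EReal) (x : ℝ) : Set ℝ :=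
  {d : ℝ | ∀ y : ℝ, f x + ((d * (y - x) : ℝ) : EReal) ≤ f y}

/-- Convexity of an extended-real-valued function on `ℝ`. -/
def EConvexOn (f : ℝ → EReal) : Prop :=
  ∀ x y a b : ℝ, 0 ≤ a → 0 ≤ b → a + b = 1 →
    f (a * x + b * y) ≤ (a : EReal) * f x + (b : EReal) * f y

/-- The ℓ₀-penalized regularizer `g(x) = λ‖x‖₀ + h(x)`. -/
def gfun (lam : ℝ) (h : ℝ → EReal) (x : ℝ) : EReal :=
  (if x = 0 then (0 : EReal) else (lam : EReal)) + h x

/-- The parameter `τ = sup {v ≥ 0 : h*(v) ≤ λ}` (as a real number). -/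
def tau (lam : ℝ) (h : ℝ → EReal) : ℝ :=
  sSup {v : ℝ | 0 ≤ v ∧ conj h v ≤ (lam : EReal)}

/-- The parameter `μ = sup {x ≥ 0 : x ∈ ∂h*(τ)}` if `∂h*(τ) ≠ ∅`, else `+∞`. -/
def mu (lam : ℝ) (h : ℝ → EReal) : EReal :=
  if (subdiff (conj h) (tau lam h)).Nonempty then
    sSup ((fun x : ℝ => (x : EReal)) '' {x : ℝ | 0 ≤ x ∧ x ∈ subdiff (conj h) (tau lam h)})
  else ⊤

/-- The parameter `β = sup {v ≥ 0 : v ∈ dom h*}`. -/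
def beta (h : ℝ → EReal) : EReal :=
  sSup ((fun v : ℝ => (v : EReal)) '' {v : ℝ | 0 ≤ v ∧ conj h v ≠ ⊤})

/-- The parameter `κ = sup {v ≥ 0 : v ∈ ∂h(μ)}` if `μ < +∞`, else `+∞`. -/
def kappa (lam : ℝ) (h : ℝ → EReal) : EReal :=
  if mu lam h ≠ ⊤ then
    sSup ((fun v : ℝ => (v : EReal)) '' {v : ℝ | 0 ≤ v ∧ v ∈ subdiff h (mu lam h).toReal})
  else ⊤

/-- The set of minimizers of `u ↦ ½(u − v)² + γ·ω(u)`, i.e. `prox_{γω}(v)`. -/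
def proxSet (γ : ℝ) (ω : ℝ → EReal) (v : ℝ) : Set ℝ :=
  {u : ℝ | ∀ w : ℝ,
    ((2⁻¹ * (u - v) ^ 2 : ℝ) : EReal) + (γ : EReal) * ω u ≤
      ((2⁻¹ * (w - v) ^ 2 : ℝ) : EReal) + (γ : EReal) * ω w}

section Proofs

lemma le_conj (f : ℝ → EReal) (v x : ℝ) : ((v * x : ℝ) : EReal) - f x ≤ conj f v :=
  le_iSup (fun x => ((v * x : ℝ) : EReal) - f x) x

lemma conj_le {f : ℝ → EReal} {v : ℝ} {c : EReal}
    (hc : ∀ x : ℝ, ((v * x : ℝ) : EReal) - f x ≤ c) : conj f v ≤ c := iSup_le hc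

lemma conj_nonneg {f : ℝ → EReal} (hf0 : f 0 = 0) (v : ℝ) : 0 ≤ conj f v := by
  have := le_conj f v 0
  simpa [hf0] using this

lemma conj_ne_bot {f : ℝ → EReal} (hf0 : f 0 = 0) (v : ℝ) : conj f v ≠ ⊥ :=
  fun h => by simpa [h] using conj_nonneg hf0 v

-- helper : from a - c ≤ b deduce a - b ≤ c
lemma er_sub_swap {a : ℝ} {b c : EReal} (h : (a : EReal) - c ≤ b) : (a : EReal) - b ≤ c := by
  induction b with
  | bot =>
      have hc : c = ⊤ := by
        by_contra hc
        have : (a : EReal) - c ≠ ⊥ := by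
          induction c with
          | bot => simp [EReal.coe_sub_bot]
          | coe c => simp [← EReal.coe_sub]
          | top => exact absurd rfl hc
        exact this (le_bot_iff.1 h)
      simp [hc]
  | coe b =>
      induction c with
      | bot => simp [EReal.coe_sub_bot] at h
      | coe c =>
          rw [← EReal.coe_sub] at h ⊢
          rw [EReal.coe_le_coe_iff] at h ⊢
          linarith
      | top => exact le_top
  | top => simp [EReal.sub_top]

lemma conj_antitone {f g : ℝ → EReal} (h : ∀ x, f x ≤ g x) (v : ℝ) : conj g v ≤ conj f v :=
  conj_le fun x => le_trans (EReal.sub_le_sub (le_refl _) (h x)) (le_conj f v x)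

lemma conj_conj_le (f : ℝ → EReal) (x : ℝ) : conj (conj f) x ≤ f x := by
  refine conj_le fun v => ?_
  have h1 : ((x * v : ℝ) : EReal) - f x ≤ conj f v := by
    have := le_conj f v x
    rwa [mul_comm v x] at this
  exact er_sub_swap h1

lemma conj_conj_conj (f : ℝ → EReal) : conj (conj (conj f)) = conj f := by
  funext v
  refine le_antisymm (conj_conj_le (conj f) v) (conj_le fun x => ?_)
  exact le_trans (EReal.sub_le_sub (le_refl _) (conj_conj_le f x)) (le_conj (conj (conj f)) v x)

lemma conj_even {f : ℝ → EReal} (heven : ∀ x, f (-x) = f x) (v : ℝ) :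
    conj f (-v) = conj f v := by
  have key : ∀ w : ℝ, conj f w ≤ conj f (-w) := by
    intro w
    refine conj_le fun x => ?_
    have : ((-w * -x : ℝ) : EReal) - f (-x) ≤ conj f (-w) := le_conj f (-w) (-x)
    simpa [heven] using this
  refine le_antisymm ?_ (key v)
  have := key (-v); simpa using this

lemma ne_bot_of_nonneg {a : EReal} (h : 0 ≤ a) : a ≠ ⊥ := fun hb => by
  rw [hb] at h; exact EReal.bot_lt_zero.not_ge h

/-- a finite-or-top trichotomy helper: either `f x = ⊤` or `f x` is a coe of its toReal -/
lemma top_or_real {a : EReal} (h : 0 ≤ a) : a = ⊤ ∨ a = ((a.toReal : ℝ) : EReal) := by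
  rcases eq_or_ne a ⊤ with ht | ht
  · exact Or.inl ht
  · exact Or.inr (EReal.coe_toReal ht (ne_bot_of_nonneg h)).symm

lemma conj_zero {f : ℝ → EReal} (hf0 : f 0 = 0) (hge : ∀ x, 0 ≤ f x) : conj f 0 = 0 := by
  refine le_antisymm (conj_le fun x => ?_) ?_
  · rcases top_or_real (hge x) with ht | hr
    · simp [ht, EReal.sub_top]
    · have h0 : (0:ℝ) ≤ (f x).toReal := by
        rcases eq_or_ne (f x) ⊤ with ht | ht
        · simp [ht]
        · have hb' := ne_bot_of_nonneg (hge x)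
          have := EReal.toReal_le_toReal (hge x) (by simp) ht
          simpa using this
      rw [hr, zero_mul, EReal.coe_zero,
        show (0:EReal) - ((f x).toReal:EReal) = ((0 - (f x).toReal : ℝ):EReal) from (EReal.coe_sub _ _).symm]
      exact_mod_cast by linarith
  · have := le_conj f 0 0; simpa [hf0] using this

lemma conj_econvex {f : ℝ → EReal} (hge : ∀ x, 0 ≤ f x) : EConvexOn (conj f) := by
  intro u w a b ha hb hab
  refine conj_le fun x => ?_
  have h1 : ((u * x : ℝ) : EReal) - f x ≤ conj f u := le_conj f u x
  have h2 : ((w * x : ℝ) : EReal) - f x ≤ conj f w := le_conj f w x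
  rcases top_or_real (hge x) with ht | hr
  · rw [ht, EReal.sub_top]; exact bot_le
  · set r := (f x).toReal with hrdef
    rw [hr] at h1 h2 ⊢
    rw [show ((u * x : ℝ) : EReal) - (r:EReal) = ((u*x - r : ℝ):EReal) from (EReal.coe_sub _ _).symm] at h1
    rw [show ((w * x : ℝ) : EReal) - (r:EReal) = ((w*x - r : ℝ):EReal) from (EReal.coe_sub _ _).symm] at h2
    rw [show (((a*u+b*w) * x : ℝ) : EReal) - (r:EReal) = (((a*u+b*w)*x - r : ℝ):EReal) from (EReal.coe_sub _ _).symm]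
    have e1 : ((a:ℝ):EReal) * ((u*x - r:ℝ):EReal) ≤ (a:EReal) * conj f u :=
      mul_le_mul_of_nonneg_left h1 (by exact_mod_cast ha)
    have e2 : ((b:ℝ):EReal) * ((w*x - r:ℝ):EReal) ≤ (b:EReal) * conj f w :=
      mul_le_mul_of_nonneg_left h2 (by exact_mod_cast hb)
    calc (((a*u+b*w)*x - r : ℝ):EReal)
        = ((a*(u*x-r) + b*(w*x-r) : ℝ):EReal) := by
          norm_cast
          linear_combination (x*0 + (f x).toReal) * hab
      _ = ((a:ℝ):EReal) * ((u*x - r:ℝ):EReal) + ((b:ℝ):EReal) * ((w*x - r:ℝ):EReal) := by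
          rw [← EReal.coe_mul, ← EReal.coe_mul, ← EReal.coe_add]
      _ ≤ (a:EReal) * conj f u + (b:EReal) * conj f w := add_le_add e1 e2

lemma mono_even_convex {f : ℝ → EReal} (hconv : EConvexOn f) (heven : ∀ x, f (-x) = f x)
    {u w : ℝ} (hu : 0 ≤ u) (huw : u ≤ w) : f u ≤ f w := by
  rcases eq_or_lt_of_le (hu.trans huw) with hw0 | hw0
  · have : u = 0 := le_antisymm (by linarith) hu
    rw [this, ← hw0]
  · have hw' : w ≠ 0 := ne_of_gt hw0
    set a := (w + u) / (2*w) with hadef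
    set b := (w - u) / (2*w) with hbdef
    have ha : 0 ≤ a := by positivity
    have hb : 0 ≤ b := div_nonneg (by linarith) (by linarith)
    have hab : a + b = 1 := by rw [hadef, hbdef, ← add_div]; field_simp; ring
    have hx : a * w + b * (-w) = u := by rw [hadef, hbdef]; field_simp; ring
    have := hconv w (-w) a b ha hb hab
    rw [hx, heven] at this
    calc f u ≤ (a : EReal) * f w + (b : EReal) * f w := this
      _ = ((a:EReal) + (b:EReal)) * f w := (EReal.right_distrib_of_nonneg (by exact_mod_cast ha) (by exact_mod_cast hb)).symm
      _ = f w := by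
          rw [← EReal.coe_add, hab, EReal.coe_one, one_mul]

lemma three_point {f : ℝ → EReal} (hconv : EConvexOn f) (hge : ∀ x, 0 ≤ f x)
    {u v w : ℝ} (huv : u < v) (hvw : v < w) (hu : f u ≠ ⊤) (hw : f w ≠ ⊤) :
    f v ≠ ⊤ ∧
      (f v).toReal * (w - u) ≤ (f u).toReal * (w - v) + (f w).toReal * (v - u) := by
  have huw : u < w := huv.trans hvw
  set a := (w - v) / (w - u) with hadef
  set b := (v - u) / (w - u) with hbdef
  have ha : 0 ≤ a := by apply div_nonneg <;> linarith
  have hb : 0 ≤ b := by apply div_nonneg <;> linarith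
  have hwu' : w - u ≠ 0 := by intro hc; linarith [huw]
  have hab : a + b = 1 := by rw [hadef, hbdef, ← add_div]; field_simp; ring
  have hx : a * u + b * w = v := by rw [hadef, hbdef]; field_simp; ring
  have hkey := hconv u w a b ha hb hab
  rw [hx] at hkey
  have hur : f u = ((f u).toReal : EReal) := (EReal.coe_toReal hu (ne_bot_of_nonneg (hge u))).symm
  have hwr : f w = ((f w).toReal : EReal) := (EReal.coe_toReal hw (ne_bot_of_nonneg (hge w))).symm
  rw [hur, hwr] at hkey
  rw [← EReal.coe_mul, ← EReal.coe_mul, ← EReal.coe_add] at hkey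
  have hvtop : f v ≠ ⊤ := by
    intro hvt
    rw [hvt] at hkey
    exact (EReal.coe_ne_top _) (top_le_iff.1 hkey)
  refine ⟨hvtop, ?_⟩
  have h2 : (f v).toReal ≤ a * (f u).toReal + b * (f w).toReal := by
    have := EReal.toReal_le_toReal hkey (ne_bot_of_nonneg (hge v)) (EReal.coe_ne_top _)
    rw [EReal.toReal_coe] at this; exact this
  rw [hadef, hbdef] at h2
  have hwu : 0 < w - u := by linarith
  rw [div_mul_eq_mul_div, div_mul_eq_mul_div, ← add_div, le_div_iff₀ hwu] at h2
  nlinarith [h2]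

/-- membership in subdiff, real-values form -/
lemma mem_subdiff_of_reals {f : ℝ → EReal} {x d : ℝ}
    (hfx : f x ≠ ⊤) (hge : ∀ y, 0 ≤ f y)
    (H : ∀ y : ℝ, f y ≠ ⊤ → (f x).toReal + d * (y - x) ≤ (f y).toReal) :
    d ∈ subdiff f x := by
  intro y
  rcases top_or_real (hge y) with ht | hy
  · rw [ht]; exact le_top
  · rw [hy, (EReal.coe_toReal hfx (ne_bot_of_nonneg (hge x))).symm, ← EReal.coe_add,
      EReal.coe_le_coe_iff]
    exact H y (by rw [hy]; exact EReal.coe_ne_top _)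

lemma subdiff_real_ineq {f : ℝ → EReal} {x d : ℝ} (hd : d ∈ subdiff f x)
    (hge : ∀ y, 0 ≤ f y) {y : ℝ} (hfy : f y ≠ ⊤) (hfx : f x ≠ ⊤) :
    (f x).toReal + d * (y - x) ≤ (f y).toReal := by
  have := hd y
  rw [(EReal.coe_toReal hfx (ne_bot_of_nonneg (hge x))).symm, ← EReal.coe_add] at this
  have := EReal.toReal_le_toReal this (EReal.coe_ne_bot _) hfy
  rw [EReal.toReal_coe] at this; exact this

lemma subdiff_fx_ne_top {f : ℝ → EReal} {x d : ℝ} (hd : d ∈ subdiff f x)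
    (hf0 : f 0 = 0) : f x ≠ ⊤ := by
  intro ht
  have := hd 0
  rw [ht, hf0] at this
  have h2 : (⊤:EReal) + ((d * (0 - x) : ℝ) : EReal) = ⊤ := EReal.top_add_of_ne_bot (EReal.coe_ne_bot _)
  rw [h2] at this
  exact (EReal.coe_ne_top 0).symm (top_le_iff.1 this).symm

/-- reflection -/
lemma subdiff_neg {f : ℝ → EReal} (heven : ∀ x, f (-x) = f x) {x d : ℝ} :
    d ∈ subdiff f x ↔ -d ∈ subdiff f (-x) := by
  have key : ∀ x d : ℝ, d ∈ subdiff f x → -d ∈ subdiff f (-x) := by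
    intro x d hd y
    have := hd (-y)
    rw [heven y] at this
    rw [heven x]
    convert this using 3
    ring
  constructor
  · exact key x d
  · intro hd
    have := key (-x) (-d) hd
    simpa using this

/-- convexity of the subdifferential set -/
lemma subdiff_segment {f : ℝ → EReal} {x d1 d2 d : ℝ}
    (h1 : d1 ∈ subdiff f x) (h2 : d2 ∈ subdiff f x)
    (hd : d1 ≤ d) (hd' : d ≤ d2) (hge : ∀ y, 0 ≤ f y) (hf0 : f 0 = 0) :
    d ∈ subdiff f x := by
  have hfx : f x ≠ ⊤ := subdiff_fx_ne_top h1 hf0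
  refine mem_subdiff_of_reals hfx hge fun y hfy => ?_
  rcases le_total x y with hxy | hxy
  · have := subdiff_real_ineq h2 hge hfy hfx
    nlinarith
  · have := subdiff_real_ineq h1 hge hfy hfx
    nlinarith

/-- the nonneg supremum of the subdifferential is a subgradient -/
lemma sup_mem_subdiff {f : ℝ → EReal} {c M : ℝ} (hfc : f c ≠ ⊤) (hge : ∀ y, 0 ≤ f y)
    (hne : ∃ t, (0 ≤ t ∧ t ∈ subdiff f c) ∧ t ≤ M)
    (hM : ∀ r : ℝ, (∀ t, 0 ≤ t → t ∈ subdiff f c → t ≤ r) → M ≤ r) :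
    M ∈ subdiff f c := by
  obtain ⟨t0, ⟨ht0, ht0mem⟩, ht0M⟩ := hne
  refine mem_subdiff_of_reals hfc hge fun y hfy => ?_
  rcases lt_trichotomy y c with hyc | hyc | hyc
  · have := subdiff_real_ineq ht0mem hge hfy hfc
    nlinarith
  · subst hyc; simp
  · have hMs : M ≤ ((f y).toReal - (f c).toReal) / (y - c) := by
      refine hM _ fun t ht htm => ?_
      have := subdiff_real_ineq htm hge hfy hfc
      rw [le_div_iff₀ (by linarith)]
      nlinarith
    rw [le_div_iff₀ (by linarith)] at hMs
    nlinarith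

/-- existence of a nonnegative subgradient at interior points -/
lemma exists_subgrad {f : ℝ → EReal} (hconv : EConvexOn f) (hf0 : f 0 = 0)
    (hge : ∀ y, 0 ≤ f y) (heven : ∀ y, f (-y) = f y)
    {t xf : ℝ} (ht : 0 < t) (htx : t < xf) (hfx : f xf ≠ ⊤) :
    ∃ d : ℝ, 0 ≤ d ∧ d ∈ subdiff f t := by
  have hft : f t ≠ ⊤ := by
    intro htop
    exact hfx (top_le_iff.1 (htop ▸ mono_even_convex hconv heven ht.le htx.le))
  have hfin : ∀ e, 0 ≤ e → e ≤ xf → f e ≠ ⊤ := fun e he hex htop =>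
    hfx (top_le_iff.1 (htop ▸ mono_even_convex hconv heven he hex))
  set F : ℝ → ℝ := fun y => (f y).toReal with hF
  set Sl : Set ℝ := {s | ∃ e, (0 ≤ e ∧ e < t) ∧ s = (F t - F e) / (t - e)} with hSl
  have hne : Sl.Nonempty := ⟨(F t - F 0) / (t - 0), 0, ⟨le_refl 0, ht⟩, rfl⟩
  have hbdd : BddAbove Sl := by
    refine ⟨(F xf - F t) / (xf - t), fun s hs => ?_⟩
    obtain ⟨e, ⟨he0, het⟩, rfl⟩ := hs
    have h3 := (three_point hconv hge het htx (hfin e he0 (by linarith)) hfx).2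
    rw [div_le_div_iff₀ (by linarith) (by linarith)]
    nlinarith
  set d := sSup Sl with hd
  have hd0 : 0 ≤ d := by
    have h1 : (F t - F 0) / (t - 0) ∈ Sl := ⟨0, ⟨le_refl 0, ht⟩, rfl⟩
    have h2 : 0 ≤ (F t - F 0) / (t - 0) := by
      have : F 0 = 0 := by rw [hF]; simp [hf0]
      rw [this]
      apply div_nonneg _ (by linarith)
      have : 0 ≤ f t := hge t
      have := EReal.toReal_le_toReal this (by simp) hft
      simpa using this
    exact h2.trans (le_csSup hbdd h1)
  refine ⟨d, hd0, ?_⟩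
  -- first: the inequality for all z ≥ 0
  have key : ∀ z, 0 ≤ z → f z ≠ ⊤ → F t + d * (z - t) ≤ F z := by
    intro z hz hfz
    rcases lt_trichotomy z t with hzt | hzt | hzt
    · -- slope(z,t) ∈ Sl so d ≥ it
      have hmem : (F t - F z) / (t - z) ∈ Sl := ⟨z, ⟨hz, hzt⟩, rfl⟩
      have := le_csSup hbdd hmem
      rw [div_le_iff₀ (by linarith)] at this
      nlinarith
    · subst hzt; simp
    · -- d ≤ slope(t,z) : every slope(e,t) ≤ slope(t,z)
      have hub : d ≤ (F z - F t) / (z - t) := by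
        refine csSup_le hne fun s hs => ?_
        obtain ⟨e, ⟨he0, het⟩, rfl⟩ := hs
        have h3 := (three_point hconv hge het hzt (hfin e he0 (by linarith)) hfz).2
        rw [div_le_div_iff₀ (by linarith) (by linarith)]
        nlinarith
      rw [le_div_iff₀ (by linarith)] at hub
      nlinarith
  refine mem_subdiff_of_reals hft hge fun y hfy => ?_
  rcases le_total 0 y with hy0 | hy0
  · exact key y hy0 hfy
  · have h1 : f (-y) ≠ ⊤ := by rw [heven]; exact hfy
    have h2 := key (-y) (by linarith) h1
    have h3 : F (-y) = F y := by rw [hF]; simp only []; rw [heven]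
    rw [h3] at h2
    nlinarith

lemma er_coe_sub (a : ℝ) {b : EReal} (hb : b ≠ ⊤) (hb' : b ≠ ⊥) :
    (a : EReal) - b = ((a - b.toReal : ℝ) : EReal) := by
  conv_lhs => rw [(EReal.coe_toReal hb hb').symm]
  rw [← EReal.coe_sub]

lemma subdiff_conj_flip {φ : ℝ → EReal} (hphi0 : φ 0 = 0) (hphige : ∀ v, 0 ≤ φ v)
    (hcc : conj (conj φ) = φ) {x : ℝ} (hx : conj φ x ≠ ⊤) :
    subdiff (conj φ) x = {d : ℝ | x ∈ subdiff φ d} := by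
  set G := conj φ with hG
  have hGge : ∀ y, 0 ≤ G y := conj_nonneg hphi0
  have hGxbot : G x ≠ ⊥ := ne_bot_of_nonneg (hGge x)
  set gx := (G x).toReal with hgx
  have hGx : G x = ((gx : ℝ) : EReal) := (EReal.coe_toReal hx hGxbot).symm
  ext d
  simp only [Set.mem_setOf_eq]
  constructor
  · intro hd
    have hphid_le : φ d ≤ ((d * x - gx : ℝ) : EReal) := by
      rw [← hcc]
      refine conj_le fun y => ?_
      rcases top_or_real (hGge y) with ht | hr
      · rw [ht, EReal.sub_top]; exact bot_le
      · have hGy : G y ≠ ⊤ := by rw [hr]; exact EReal.coe_ne_top _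
        have hre := subdiff_real_ineq hd hGge hGy hx
        rw [er_coe_sub _ hGy (ne_bot_of_nonneg (hGge y)), EReal.coe_le_coe_iff]
        nlinarith
    have hphid_top : φ d ≠ ⊤ := fun ht => by
      rw [ht] at hphid_le; exact (EReal.coe_ne_top _) (top_le_iff.1 hphid_le)
    have hphid_re : (φ d).toReal ≤ d * x - gx := by
      have := EReal.toReal_le_toReal hphid_le (ne_bot_of_nonneg (hphige d)) (EReal.coe_ne_top _)
      rw [EReal.toReal_coe] at this; exact this
    refine mem_subdiff_of_reals hphid_top hphige fun e hfe => ?_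
    have hB : x * e - (φ e).toReal ≤ gx := by
      have h1 : ((x * e : ℝ) : EReal) - φ e ≤ G x := le_conj φ x e
      rw [er_coe_sub _ hfe (ne_bot_of_nonneg (hphige e)), hGx, EReal.coe_le_coe_iff] at h1
      linarith
    nlinarith
  · intro hd
    have hphid_top : φ d ≠ ⊤ := subdiff_fx_ne_top hd hphi0
    set pd := (φ d).toReal with hpd
    have hGx_le : G x ≤ ((x * d - pd : ℝ) : EReal) := by
      refine conj_le fun e => ?_
      rcases top_or_real (hphige e) with ht | hr
      · rw [ht, EReal.sub_top]; exact bot_le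
      · have hfe : φ e ≠ ⊤ := by rw [hr]; exact EReal.coe_ne_top _
        have hre := subdiff_real_ineq hd hphige hfe hphid_top
        rw [er_coe_sub _ hfe (ne_bot_of_nonneg (hphige e)), EReal.coe_le_coe_iff]
        nlinarith
    have hgx_re : gx ≤ x * d - pd := by
      have := EReal.toReal_le_toReal hGx_le hGxbot (EReal.coe_ne_top _)
      rw [EReal.toReal_coe] at this; exact this
    intro y
    rcases top_or_real (hGge y) with ht | hr
    · rw [ht]; exact le_top
    · have hGy : G y ≠ ⊤ := by rw [hr]; exact EReal.coe_ne_top _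
      have h1 : ((y * d : ℝ) : EReal) - φ d ≤ G y := le_conj φ y d
      rw [er_coe_sub _ hphid_top (ne_bot_of_nonneg (hphige d)), hr, EReal.coe_le_coe_iff] at h1
      rw [hGx, hr, ← EReal.coe_add, EReal.coe_le_coe_iff]
      nlinarith


variable {lam : ℝ} {h : ℝ → EReal}

lemma gfun_zero (h0 : h 0 = 0) : gfun lam h 0 = 0 := by simp [gfun, h0]

lemma gfun_nonneg (hlam : 0 < lam) (hge : ∀ x : ℝ, 0 ≤ h x) (x : ℝ) :
    0 ≤ gfun lam h x := by
  unfold gfun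
  split
  · simpa using hge x
  · exact add_nonneg (by exact_mod_cast hlam.le) (hge x)

lemma h_le_gfun (hlam : 0 < lam) (h0 : h 0 = 0) (x : ℝ) : h x ≤ gfun lam h x := by
  unfold gfun
  split
  · simp
  · exact le_add_of_nonneg_left (by exact_mod_cast hlam.le)

lemma gfun_even (heven : ∀ x : ℝ, h (-x) = h x) (x : ℝ) :
    gfun lam h (-x) = gfun lam h x := by
  unfold gfun
  rw [heven x]
  congr 1
  simp [neg_eq_zero]

lemma er_sub_le_of_le_add {a c : EReal} {l : ℝ} (hle : a ≤ c + (l : EReal)) :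
    a - (l : EReal) ≤ c := by
  induction a with
  | bot => simp [EReal.bot_sub]
  | coe a =>
      induction c with
      | bot => simp at hle
      | coe c =>
          rw [← EReal.coe_add, EReal.coe_le_coe_iff] at hle
          rw [← EReal.coe_sub, EReal.coe_le_coe_iff]
          linarith
      | top => exact le_top
  | top =>
      induction c with
      | bot =>
          exfalso
          rw [show (⊥:EReal) + (l:EReal) = ⊥ by simp] at hle
          simp at hle
      | coe c => simp [← EReal.coe_add] at hle
      | top => simp [EReal.top_sub_coe]

/-- the conjugate of `g`: `g* = max(0, h* − λ)`. -/
lemma conj_gfun_eq (hlam : 0 < lam) (h0 : h 0 = 0) (hge : ∀ x : ℝ, 0 ≤ h x) (v : ℝ) :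
    conj (gfun lam h) v = max 0 (conj h v - (lam : EReal)) := by
  refine le_antisymm (conj_le fun x => ?_) ?_
  · by_cases hx : x = 0
    · subst hx
      rw [gfun_zero h0]
      refine le_trans ?_ (le_max_left _ _)
      simp
    · refine le_trans ?_ (le_max_right _ _)
      have hgx : gfun lam h x = (lam : EReal) + h x := by simp [gfun, hx]
      rw [hgx]
      rcases top_or_real (hge x) with ht | hr
      · rw [ht]
        rw [show (lam:EReal) + ⊤ = ⊤ from EReal.add_top_of_ne_bot (EReal.coe_ne_bot _)]
        simp [EReal.sub_top]
      · rw [hr, ← EReal.coe_add, ← EReal.coe_sub]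
        have h1 : ((v*x : ℝ):EReal) - h x ≤ conj h v := le_conj h v x
        rw [hr, ← EReal.coe_sub] at h1
        calc ((v*x - (lam + (h x).toReal) : ℝ) : EReal)
            = ((v*x - (h x).toReal : ℝ) : EReal) - (lam : EReal) := by
              rw [← EReal.coe_sub]; norm_cast; ring
          _ ≤ conj h v - (lam : EReal) := EReal.sub_le_sub h1 (le_refl _)
  · rw [max_le_iff]
    constructor
    · exact conj_nonneg (gfun_zero h0) v
    · refine er_sub_le_of_le_add ?_
      refine conj_le fun x => ?_
      by_cases hx : x = 0
      · subst hx
        rw [h0]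
        simp only [mul_zero, EReal.coe_zero, sub_zero]
        calc (0:EReal) ≤ conj (gfun lam h) v + 0 := by
              simpa using conj_nonneg (gfun_zero h0) v
          _ ≤ conj (gfun lam h) v + (lam:EReal) :=
              add_le_add (le_refl _) (by exact_mod_cast hlam.le)
      · have hgx : gfun lam h x = (lam : EReal) + h x := by simp [gfun, hx]
        rcases top_or_real (hge x) with ht | hr
        · rw [ht, EReal.sub_top]
          exact bot_le
        · have h1 : ((v*x : ℝ):EReal) - gfun lam h x ≤ conj (gfun lam h) v := le_conj _ v x
          rw [hgx, hr, ← EReal.coe_add, ← EReal.coe_sub] at h1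
          rw [hr, ← EReal.coe_sub]
          calc ((v*x - (h x).toReal : ℝ) : EReal)
              = ((v*x - (lam + (h x).toReal) : ℝ) : EReal) + (lam : EReal) := by
                rw [← EReal.coe_add]; norm_cast; ring
            _ ≤ conj (gfun lam h) v + (lam : EReal) := add_le_add h1 (le_refl _)

/-- trichotomy for φ -/
lemma phi_cases (hlam : 0 < lam) (h0 : h 0 = 0) (hge : ∀ x : ℝ, 0 ≤ h x) (v : ℝ) :
    (conj h v = ⊤ ∧ conj (gfun lam h) v = ⊤) ∨
    (conj h v = (((conj h v).toReal : ℝ) : EReal) ∧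
      conj (gfun lam h) v = ((max 0 ((conj h v).toReal - lam) : ℝ) : EReal)) := by
  have hpsi0 : conj h 0 = 0 := conj_zero h0 hge
  rcases top_or_real (conj_nonneg h0 v) with ht | hr
  · left
    refine ⟨ht, ?_⟩
    rw [conj_gfun_eq hlam h0 hge, ht, EReal.top_sub_coe]
    simp
  · right
    refine ⟨hr, ?_⟩
    rw [conj_gfun_eq hlam h0 hge, hr, ← EReal.coe_sub]
    rw [EReal.toReal_coe]
    rcases le_total ((conj h v).toReal - lam) 0 with hc | hc
    · rw [max_eq_left hc,
        max_eq_left (show (((conj h v).toReal - lam : ℝ):EReal) ≤ 0 by exact_mod_cast hc)]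
      simp
    · rw [max_eq_right hc,
        max_eq_right (show (0:EReal) ≤ (((conj h v).toReal - lam : ℝ):EReal) by exact_mod_cast hc)]

lemma er_ne_top_of_le_coe {a : EReal} {l : ℝ} (hle : a ≤ (l : EReal)) : a ≠ ⊤ :=
  fun ht => EReal.coe_ne_top l (top_le_iff.1 (ht ▸ hle))

lemma T_zero (hlam : 0 < lam) (h0 : h 0 = 0) (hge : ∀ x, 0 ≤ h x) :
    (0:ℝ) ∈ {v : ℝ | 0 ≤ v ∧ conj h v ≤ (lam:EReal)} :=
  ⟨le_refl 0, by rw [conj_zero h0 hge]; exact_mod_cast hlam.le⟩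

lemma T_bdd (hge : ∀ x, 0 ≤ h x) (hdom : ∃ x : ℝ, 0 < x ∧ h x ≠ ⊤) :
    BddAbove {v : ℝ | 0 ≤ v ∧ conj h v ≤ (lam:EReal)} := by
  obtain ⟨x0, hx0, hhx0⟩ := hdom
  refine ⟨(lam + (h x0).toReal)/x0, fun v hv => ?_⟩
  have h1 : ((v * x0 : ℝ):EReal) - h x0 ≤ conj h v := le_conj h v x0
  rw [er_coe_sub _ hhx0 (ne_bot_of_nonneg (hge x0))] at h1
  have h2 : ((v * x0 - (h x0).toReal : ℝ):EReal) ≤ (lam:EReal) := h1.trans hv.2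
  rw [EReal.coe_le_coe_iff] at h2
  rw [le_div_iff₀ hx0]
  linarith

lemma tau_nonneg (hlam : 0 < lam) (h0 : h 0 = 0) (hge : ∀ x, 0 ≤ h x)
    (hdom : ∃ x : ℝ, 0 < x ∧ h x ≠ ⊤) : 0 ≤ tau lam h :=
  le_csSup (T_bdd hge hdom) (T_zero hlam h0 hge)

lemma psi_tau_le (hlam : 0 < lam) (h0 : h 0 = 0) (hge : ∀ x, 0 ≤ h x)
    (hdom : ∃ x : ℝ, 0 < x ∧ h x ≠ ⊤) : conj h (tau lam h) ≤ (lam : EReal) := by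
  refine conj_le fun x => ?_
  rcases top_or_real (hge x) with ht | hr
  · rw [ht, EReal.sub_top]; exact bot_le
  · have hrge : 0 ≤ (h x).toReal := by
      have := hge x
      rw [hr] at this
      exact_mod_cast this
    rw [er_coe_sub _ (by rw [hr]; exact EReal.coe_ne_top _) (ne_bot_of_nonneg (hge x)),
      EReal.coe_le_coe_iff]
    rcases lt_trichotomy x 0 with hx | hx | hx
    · have := tau_nonneg hlam h0 hge hdom
      nlinarith
    · subst hx; nlinarith
    · have hbound : ∀ v ∈ {v : ℝ | 0 ≤ v ∧ conj h v ≤ (lam:EReal)}, v ≤ (lam + (h x).toReal)/x := by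
        intro v hv
        have h1 : ((v * x : ℝ):EReal) - h x ≤ conj h v := le_conj h v x
        rw [er_coe_sub _ (by rw [hr]; exact EReal.coe_ne_top _) (ne_bot_of_nonneg (hge x))] at h1
        have h2 := h1.trans hv.2
        rw [EReal.coe_le_coe_iff] at h2
        rw [le_div_iff₀ hx]
        linarith
      have := csSup_le ⟨0, T_zero hlam h0 hge⟩ hbound
      have htau : tau lam h ≤ (lam + (h x).toReal)/x := this
      rw [le_div_iff₀ hx] at htau
      nlinarith

lemma gt_tau_imp (hlam : 0 < lam) (h0 : h 0 = 0) (hge : ∀ x, 0 ≤ h x)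
    (hdom : ∃ x : ℝ, 0 < x ∧ h x ≠ ⊤) {v : ℝ} (hv : tau lam h < v) :
    (lam : EReal) < conj h v := by
  by_contra hc
  push_neg at hc
  have hvT : v ∈ {v : ℝ | 0 ≤ v ∧ conj h v ≤ (lam:EReal)} :=
    ⟨(tau_nonneg hlam h0 hge hdom).trans hv.le, hc⟩
  exact absurd (le_csSup (T_bdd hge hdom) hvT) (not_le.2 hv)

lemma psi_abs (heven : ∀ x, h (-x) = h x) (v : ℝ) : conj h |v| = conj h v := by
  rcases le_total 0 v with hv | hv
  · rw [abs_of_nonneg hv]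
  · rw [abs_of_nonpos hv, ← conj_even (f := h) heven v]

lemma le_tau_iff (hlam : 0 < lam) (h0 : h 0 = 0) (hge : ∀ x, 0 ≤ h x)
    (hdom : ∃ x : ℝ, 0 < x ∧ h x ≠ ⊤) (heven : ∀ x, h (-x) = h x) {v : ℝ} :
    conj h v ≤ (lam : EReal) ↔ |v| ≤ tau lam h := by
  constructor
  · intro hv
    exact le_csSup (T_bdd hge hdom) ⟨abs_nonneg v, by rw [psi_abs heven]; exact hv⟩
  · intro hv
    calc conj h v = conj h |v| := (psi_abs heven v).symm
      _ ≤ conj h (tau lam h) :=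
          mono_even_convex (conj_econvex hge) (conj_even heven) (abs_nonneg v) hv
      _ ≤ (lam : EReal) := psi_tau_le hlam h0 hge hdom

lemma psi_jump (hlam : 0 < lam) (h0 : h 0 = 0) (hge : ∀ x, 0 ≤ h x)
    (hdom : ∃ x : ℝ, 0 < x ∧ h x ≠ ⊤)
    (hlt : conj h (tau lam h) < (lam : EReal)) {e : ℝ} (he : tau lam h < e) :
    conj h e = ⊤ := by
  by_contra hne
  set A := (conj h (tau lam h)).toReal with hA
  set B := (conj h e).toReal with hB
  have hpsige : ∀ v, 0 ≤ conj h v := conj_nonneg h0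
  have hτtop : conj h (tau lam h) ≠ ⊤ := er_ne_top_of_le_coe (psi_tau_le hlam h0 hge hdom)
  have hcoeA : conj h (tau lam h) = ((A:ℝ):EReal) := (EReal.coe_toReal hτtop (ne_bot_of_nonneg (hpsige _))).symm
  have hcoeB : conj h e = ((B:ℝ):EReal) := (EReal.coe_toReal hne (ne_bot_of_nonneg (hpsige _))).symm
  have hAlam : A < lam := by
    rw [hcoeA, EReal.coe_lt_coe_iff] at hlt; exact hlt
  have hBlam : lam < B := by
    have := gt_tau_imp hlam h0 hge hdom he
    rw [hcoeB, EReal.coe_lt_coe_iff] at this; exact this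
  set t := (lam - A) / (2*(B - A)) with ht
  have hBA : 0 < B - A := by linarith
  have ht0 : 0 < t := div_pos (by linarith) (by linarith)
  have ht1 : t < 1 := by
    rw [ht, div_lt_one (by linarith)]
    linarith
  have hconv := conj_econvex (f := h) hge (tau lam h) e (1 - t) t (by linarith) ht0.le (by ring)
  set e' := (1 - t) * tau lam h + t * e with he'
  have he'τ : tau lam h < e' := by
    rw [he']
    nlinarith
  have hup : conj h e' ≤ (((1-t)*A + t*B : ℝ) : EReal) := by
    calc conj h e' ≤ ((1-t):EReal) * conj h (tau lam h) + (t:EReal) * conj h e := hconv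
      _ = (((1-t)*A + t*B : ℝ) : EReal) := by
          rw [hcoeA, hcoeB]
          norm_cast
  have hlow := gt_tau_imp hlam h0 hge hdom he'τ
  have : (lam:EReal) < (((1-t)*A + t*B : ℝ) : EReal) := hlow.trans_le hup
  rw [EReal.coe_lt_coe_iff] at this
  have htB : t * (B - A) = (lam - A)/2 := by
    rw [ht]; field_simp
  nlinarith

lemma zero_mem_subdiff_zero {f : ℝ → EReal} (hf0 : f 0 = 0) (hge : ∀ x, 0 ≤ f x) :
    (0:ℝ) ∈ subdiff f 0 := by
  intro y
  simpa [hf0] using hge y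

lemma subdiff_psi_tau_nonneg_elem (hlam : 0 < lam) (h0 : h 0 = 0) (hge : ∀ x, 0 ≤ h x)
    (hdom : ∃ x : ℝ, 0 < x ∧ h x ≠ ⊤) (heven : ∀ x, h (-x) = h x)
    (hne : (subdiff (conj h) (tau lam h)).Nonempty) :
    ∃ t, 0 ≤ t ∧ t ∈ subdiff (conj h) (tau lam h) := by
  have hpsige : ∀ v, 0 ≤ conj h v := conj_nonneg h0
  rcases eq_or_lt_of_le (tau_nonneg hlam h0 hge hdom) with hτ0 | hτ0
  · refine ⟨0, le_refl 0, ?_⟩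
    rw [← hτ0]
    exact zero_mem_subdiff_zero (conj_zero h0 hge) hpsige
  · obtain ⟨t, ht⟩ := hne
    rcases le_or_gt 0 t with h0t | h0t
    · exact ⟨t, h0t, ht⟩
    · exfalso
      have hτtop : conj h (tau lam h) ≠ ⊤ := er_ne_top_of_le_coe (psi_tau_le hlam h0 hge hdom)
      have hnegeq : conj h (-(tau lam h)) = conj h (tau lam h) := conj_even heven _
      have hre := subdiff_real_ineq ht hpsige (y := -(tau lam h)) (by rw [hnegeq]; exact hτtop) hτtop
      rw [hnegeq] at hre
      nlinarith

lemma mu_spec (hlam : 0 < lam) (h0 : h 0 = 0) (hge : ∀ x, 0 ≤ h x)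
    (hdom : ∃ x : ℝ, 0 < x ∧ h x ≠ ⊤) (heven : ∀ x, h (-x) = h x)
    (hmu : mu lam h ≠ ⊤) :
    mu lam h = (((mu lam h).toReal : ℝ) : EReal) ∧ 0 ≤ (mu lam h).toReal ∧
    (mu lam h).toReal ∈ subdiff (conj h) (tau lam h) ∧
    (∀ t, 0 ≤ t → t ∈ subdiff (conj h) (tau lam h) → t ≤ (mu lam h).toReal) ∧
    conj h (tau lam h) = (lam : EReal) := by
  have hpsige : ∀ v, 0 ≤ conj h v := conj_nonneg h0
  have hτtop : conj h (tau lam h) ≠ ⊤ := er_ne_top_of_le_coe (psi_tau_le hlam h0 hge hdom)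
  by_cases hne : (subdiff (conj h) (tau lam h)).Nonempty
  swap
  · exact absurd (by rw [mu, if_neg hne]) hmu
  have hmudef : mu lam h =
      sSup ((fun x : ℝ => (x : EReal)) '' {x : ℝ | 0 ≤ x ∧ x ∈ subdiff (conj h) (tau lam h)}) := by
    rw [mu, if_pos hne]
  obtain ⟨t0, ht00, ht0mem⟩ := subdiff_psi_tau_nonneg_elem hlam h0 hge hdom heven hne
  have ht0le : ((t0:ℝ):EReal) ≤ mu lam h := by
    rw [hmudef]
    exact le_sSup ⟨t0, ⟨ht00, ht0mem⟩, rfl⟩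
  have hmubot : mu lam h ≠ ⊥ :=
    ne_bot_of_nonneg (le_trans (by exact_mod_cast ht00) ht0le)
  set M := (mu lam h).toReal with hM
  have hcoeM : mu lam h = ((M:ℝ):EReal) := (EReal.coe_toReal hmu hmubot).symm
  have hub : ∀ t, 0 ≤ t → t ∈ subdiff (conj h) (tau lam h) → t ≤ M := by
    intro t ht htmem
    have : ((t:ℝ):EReal) ≤ mu lam h := by
      rw [hmudef]; exact le_sSup ⟨t, ⟨ht, htmem⟩, rfl⟩
    rw [hcoeM, EReal.coe_le_coe_iff] at this
    exact this
  have hMge : 0 ≤ M := ht00.trans (hub t0 ht00 ht0mem)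
  have hMglb : ∀ r : ℝ, (∀ t, 0 ≤ t → t ∈ subdiff (conj h) (tau lam h) → t ≤ r) → M ≤ r := by
    intro r hr
    have : mu lam h ≤ ((r:ℝ):EReal) := by
      rw [hmudef]
      refine sSup_le fun a ha => ?_
      obtain ⟨t, ⟨ht, htmem⟩, rfl⟩ := ha
      simp only []
      exact_mod_cast hr t ht htmem
    rw [hcoeM, EReal.coe_le_coe_iff] at this
    exact this
  have hMmem : M ∈ subdiff (conj h) (tau lam h) :=
    sup_mem_subdiff hτtop hpsige ⟨t0, ⟨ht00, ht0mem⟩, hub t0 ht00 ht0mem⟩ hMglb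
  refine ⟨hcoeM, hMge, hMmem, hub, ?_⟩
  by_contra hψτ
  have hlt : conj h (tau lam h) < (lam:EReal) :=
    lt_of_le_of_ne (psi_tau_le hlam h0 hge hdom) hψτ
  have hmem1 : M + 1 ∈ subdiff (conj h) (tau lam h) := by
    refine mem_subdiff_of_reals hτtop hpsige fun y hfy => ?_
    rcases le_or_gt y (tau lam h) with hy | hy
    · have := subdiff_real_ineq hMmem hpsige hfy hτtop
      nlinarith
    · exact absurd (psi_jump hlam h0 hge hdom hlt hy) hfy
  have := hub (M+1) (by linarith) hmem1
  linarith

lemma mu_ne_zero (hlam : 0 < lam) (h0 : h 0 = 0) (hge : ∀ x, 0 ≤ h x)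
    (hdom : ∃ x : ℝ, 0 < x ∧ h x ≠ ⊤) (heven : ∀ x, h (-x) = h x) :
    mu lam h ≠ 0 := by
  intro hmu0
  have hmu : mu lam h ≠ ⊤ := by rw [hmu0]; exact EReal.zero_lt_top.ne
  obtain ⟨hcoe, hMge, hMmem, hub, hψτ⟩ := mu_spec hlam h0 hge hdom heven hmu
  have hM0 : (mu lam h).toReal = 0 := by rw [hmu0]; simp
  rw [hM0] at hMmem
  have := hMmem 0
  rw [conj_zero h0 hge, hψτ] at this
  simp only [zero_mul, mul_zero, EReal.coe_zero, add_zero] at this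
  have : (lam:ℝ) ≤ 0 := by exact_mod_cast this
  linarith

lemma er_le_of_forall_lt {a : ℝ} {Y : EReal} (H : ∀ c : ℝ, c < a → (c:EReal) ≤ Y) :
    (a:EReal) ≤ Y := by
  induction Y with
  | bot =>
      exfalso
      have := H (a-1) (by linarith)
      rw [le_bot_iff] at this
      exact EReal.coe_ne_bot _ this
  | coe y =>
      rw [EReal.coe_le_coe_iff]
      by_contra hya
      push_neg at hya
      have := H ((y+a)/2) (by linarith)
      rw [EReal.coe_le_coe_iff] at this
      linarith
  | top => exact le_top

lemma top_of_forall_coe_le {Y : EReal} (H : ∀ M : ℝ, (M:EReal) ≤ Y) : Y = ⊤ := by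
  induction Y with
  | bot =>
      exfalso
      have := H 0
      rw [le_bot_iff] at this
      exact EReal.coe_ne_bot _ this
  | coe y =>
      exfalso
      have := H (y+1)
      rw [EReal.coe_le_coe_iff] at this
      linarith
  | top => rfl

lemma conj_le_of_subdiff {f : ℝ → EReal} (hge : ∀ y, 0 ≤ f y) {t d : ℝ}
    (hd : d ∈ subdiff f t) (hft : f t ≠ ⊤) :
    conj f d ≤ ((d * t - (f t).toReal : ℝ) : EReal) := by
  refine conj_le fun y => ?_
  rcases top_or_real (hge y) with hy | hy
  · rw [hy, EReal.sub_top]; exact bot_le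
  · have hfy : f y ≠ ⊤ := by rw [hy]; exact EReal.coe_ne_top _
    have := subdiff_real_ineq hd hge hfy hft
    rw [er_coe_sub _ hfy (ne_bot_of_nonneg (hge y)), EReal.coe_le_coe_iff]
    nlinarith

lemma biconj_ge_line {f : ℝ → EReal} (hge : ∀ y, 0 ≤ f y) {t d : ℝ} (x : ℝ)
    (hd : d ∈ subdiff f t) (hft : f t ≠ ⊤) :
    (((f t).toReal + d * (x - t) : ℝ) : EReal) ≤ conj (conj f) x := by
  have h1 : ((x * d : ℝ) : EReal) - conj f d ≤ conj (conj f) x := le_conj (conj f) x d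
  have h2 := conj_le_of_subdiff hge hd hft
  calc (((f t).toReal + d * (x - t) : ℝ) : EReal)
      = ((x*d : ℝ) : EReal) - ((d * t - (f t).toReal : ℝ) : EReal) := by
        rw [← EReal.coe_sub]; norm_cast; ring
    _ ≤ ((x*d : ℝ) : EReal) - conj f d := EReal.sub_le_sub (le_refl _) h2
    _ ≤ conj (conj f) x := h1

variable {lam : ℝ} {h : ℝ → EReal}

theorem fenchel_moreau (h0 : h 0 = 0) (hge : ∀ x, 0 ≤ h x)
    (hlsc : LowerSemicontinuous h) (hconv : EConvexOn h)
    (heven : ∀ x, h (-x) = h x) : ∀ x, conj (conj h) x = h x := by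
  have hψ0 : conj h 0 = 0 := conj_zero h0 hge
  suffices hgex : ∀ x : ℝ, 0 < x → h x ≤ conj (conj h) x by
    have hkey : ∀ x : ℝ, 0 ≤ x → conj (conj h) x = h x := by
      intro x hx
      rcases eq_or_lt_of_le hx with hx0 | hx0
      · refine le_antisymm (conj_conj_le h x) ?_
        rw [← hx0, h0]
        exact conj_nonneg hψ0 0
      · exact le_antisymm (conj_conj_le h x) (hgex x hx0)
    intro x
    rcases le_total 0 x with hx | hx
    · exact hkey x hx
    · have hcceven : ∀ v, conj (conj h) (-v) = conj (conj h) v :=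
        conj_even (f := conj h) (conj_even heven)
      have h1 : conj (conj h) x = conj (conj h) (-x) := by
        rw [← hcceven (-x), neg_neg]
      rw [h1, ← heven x]
      exact hkey (-x) (by linarith)
  intro x hx
  by_cases hhx : h x = ⊤
  · rw [hhx]
    rw [top_le_iff]
    refine top_of_forall_coe_le fun M => ?_
    set Fset : Set ℝ := {y | 0 ≤ y ∧ h y ≠ ⊤} with hFset
    have hF0 : (0:ℝ) ∈ Fset := ⟨le_refl 0, by rw [h0]; exact EReal.zero_lt_top.ne⟩
    have hFb : ∀ y ∈ Fset, y < x := by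
      intro y hy
      by_contra hyx
      push_neg at hyx
      exact hy.2 (top_le_iff.1 (hhx ▸ mono_even_convex hconv heven hx.le hyx))
    have hFbdd : BddAbove Fset := ⟨x, fun y hy => (hFb y hy).le⟩
    set b := sSup Fset with hb
    have hb0 : 0 ≤ b := le_csSup hFbdd hF0
    have hbx : b ≤ x := csSup_le ⟨0, hF0⟩ fun y hy => (hFb y hy).le
    rcases eq_or_lt_of_le hbx with hbeq | hblt
    · -- b = x : use lsc
      have hMlt : (M:EReal) < h x := by rw [hhx]; exact EReal.coe_lt_top M
      obtain ⟨δ, hδ0, hδ⟩ := Metric.eventually_nhds_iff.1 (hlsc x (M:EReal) hMlt)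
      have hlt1 : max (x/2) (x - δ/2) < b := by
        rw [hbeq]
        rcases le_total (x/2) (x - δ/2) with hc | hc
        · rw [max_eq_right hc]; linarith
        · rw [max_eq_left hc]; linarith
      obtain ⟨t, htF, htgt⟩ := exists_lt_of_lt_csSup ⟨0, hF0⟩ hlt1
      have htx : t < x := hFb t htF
      have ht0 : 0 < t := lt_of_le_of_lt (by positivity) (lt_of_le_of_lt (le_max_left _ _) htgt)
      have htδ : dist t x < δ := by
        rw [Real.dist_eq, abs_of_nonpos (by linarith)]
        have := lt_of_le_of_lt (le_max_right _ _) htgt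
        linarith
      have hMt : (M:EReal) < h t := hδ htδ
      obtain ⟨t2, ht2F, ht2gt⟩ := exists_lt_of_lt_csSup ⟨0, hF0⟩ (show t < b by rw [hbeq]; exact htx)
      obtain ⟨d, hd0, hd⟩ := exists_subgrad hconv h0 hge heven ht0 ht2gt ht2F.2
      have hline := biconj_ge_line hge x hd htF.2
      refine le_trans ?_ hline
      rw [EReal.coe_le_coe_iff]
      have hMtr : M < (h t).toReal := by
        have hcoet : h t = (((h t).toReal : ℝ) : EReal) :=
          (EReal.coe_toReal htF.2 (ne_bot_of_nonneg (hge t))).symm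
        rw [hcoet, EReal.coe_lt_coe_iff] at hMt
        exact hMt
      nlinarith
    · -- b < x : slopes blow up
      have hψle : ∀ v : ℝ, 0 < v → conj h v ≤ ((v*b : ℝ) : EReal) := by
        intro v hv
        refine conj_le fun y => ?_
        rcases top_or_real (hge y) with hy | hy
        · rw [hy, EReal.sub_top]; exact bot_le
        · have hyr : 0 ≤ (h y).toReal := by
            have := hge y; rw [hy] at this; exact_mod_cast this
          rw [er_coe_sub _ (by rw [hy]; exact EReal.coe_ne_top _) (ne_bot_of_nonneg (hge y)),
            EReal.coe_le_coe_iff]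
          rcases le_total 0 y with hy0 | hy0
          · have : y ≤ b := le_csSup hFbdd ⟨hy0, by rw [hy]; exact EReal.coe_ne_top _⟩
            nlinarith
          · nlinarith
      set v := max 1 (M / (x - b)) with hv
      have hv0 : 0 < v := lt_of_lt_of_le one_pos (le_max_left _ _)
      have hvM : M ≤ v * (x - b) := by
        have : M / (x - b) ≤ v := le_max_right _ _
        rw [div_le_iff₀ (by linarith)] at this
        linarith
      have h1 : ((x * v : ℝ) : EReal) - conj h v ≤ conj (conj h) x := le_conj (conj h) x v
      have h2 : ((v * (x - b) : ℝ) : EReal) ≤ ((x * v : ℝ) : EReal) - conj h v := by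
        calc ((v * (x - b) : ℝ) : EReal) = ((x*v : ℝ):EReal) - ((v*b:ℝ):EReal) := by
              rw [← EReal.coe_sub]; norm_cast; ring
          _ ≤ ((x*v : ℝ):EReal) - conj h v := EReal.sub_le_sub (le_refl _) (hψle v hv0)
      calc (M : EReal) ≤ ((v * (x - b) : ℝ) : EReal) := by exact_mod_cast hvM
        _ ≤ ((x * v : ℝ) : EReal) - conj h v := h2
        _ ≤ conj (conj h) x := h1
  · -- h x finite
    have hcoex : h x = (((h x).toReal : ℝ) : EReal) :=
      (EReal.coe_toReal hhx (ne_bot_of_nonneg (hge x))).symm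
    rw [hcoex]
    refine er_le_of_forall_lt fun c hc => ?_
    have hclt : (c:EReal) < h x := by rw [hcoex]; exact_mod_cast hc
    obtain ⟨δ, hδ0, hδ⟩ := Metric.eventually_nhds_iff.1 (hlsc x (c:EReal) hclt)
    set t := max (x/2) (x - δ/2) with htdef
    have ht0 : 0 < t := lt_of_lt_of_le (by positivity) (le_max_left _ _)
    have htx : t < x := by
      rcases le_total (x/2) (x - δ/2) with hcm | hcm
      · rw [htdef, max_eq_right hcm]; linarith
      · rw [htdef, max_eq_left hcm]; linarith
    have htδ : dist t x < δ := by
      rw [Real.dist_eq, abs_of_nonpos (by linarith)]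
      have : x - δ/2 ≤ t := le_max_right _ _
      linarith
    have hct : (c:EReal) < h t := hδ htδ
    have hht : h t ≠ ⊤ := fun htop =>
      hhx (top_le_iff.1 (htop ▸ mono_even_convex hconv heven ht0.le htx.le))
    obtain ⟨d, hd0, hd⟩ := exists_subgrad hconv h0 hge heven ht0 htx hhx
    have hline := biconj_ge_line hge x hd hht
    refine le_trans ?_ hline
    rw [EReal.coe_le_coe_iff]
    have hctr : c < (h t).toReal := by
      have hcoet : h t = (((h t).toReal : ℝ) : EReal) :=
        (EReal.coe_toReal hht (ne_bot_of_nonneg (hge t))).symm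
      rw [hcoet, EReal.coe_lt_coe_iff] at hct
      exact hct
    nlinarith


lemma phi_zero (hlam : 0 < lam) (h0 : h 0 = 0) (hge : ∀ x : ℝ, 0 ≤ h x) :
    conj (gfun lam h) 0 = 0 :=
  conj_zero (gfun_zero h0) (gfun_nonneg hlam hge)

lemma phi_nonneg (h0 : h 0 = 0) : ∀ v, 0 ≤ conj (gfun lam h) v :=
  conj_nonneg (gfun_zero h0)

lemma phi_of_psi (hlam : 0 < lam) (h0 : h 0 = 0) (hge : ∀ x : ℝ, 0 ≤ h x)
    {v : ℝ} (hv : conj h v ≠ ⊤) :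
    conj (gfun lam h) v = ((max 0 ((conj h v).toReal - lam) : ℝ) : EReal) := by
  rcases phi_cases hlam h0 hge v with ⟨h1, _⟩ | ⟨_, h2⟩
  · exact absurd h1 hv
  · exact h2

lemma psi_ne_top_of_phi (hlam : 0 < lam) (h0 : h 0 = 0) (hge : ∀ x : ℝ, 0 ≤ h x)
    {v : ℝ} (hv : conj (gfun lam h) v ≠ ⊤) : conj h v ≠ ⊤ := by
  intro ht
  rcases phi_cases hlam h0 hge v with ⟨_, h2⟩ | ⟨h1, _⟩
  · exact hv h2
  · rw [ht] at h1
    exact EReal.coe_ne_top _ h1.symm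

lemma phi_toReal (hlam : 0 < lam) (h0 : h 0 = 0) (hge : ∀ x : ℝ, 0 ≤ h x)
    {v : ℝ} (hv : conj h v ≠ ⊤) :
    (conj (gfun lam h) v).toReal = max 0 ((conj h v).toReal - lam) := by
  rw [phi_of_psi hlam h0 hge hv, EReal.toReal_coe]

lemma phi_ne_top_of_psi (hlam : 0 < lam) (h0 : h 0 = 0) (hge : ∀ x : ℝ, 0 ≤ h x)
    {v : ℝ} (hv : conj h v ≠ ⊤) : conj (gfun lam h) v ≠ ⊤ := by
  rw [phi_of_psi hlam h0 hge hv]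
  exact EReal.coe_ne_top _

lemma phi_zero_of_le (hlam : 0 < lam) (h0 : h 0 = 0) (hge : ∀ x : ℝ, 0 ≤ h x)
    {v : ℝ} (hv : conj h v ≤ (lam : EReal)) : conj (gfun lam h) v = 0 := by
  have hvne : conj h v ≠ ⊤ := er_ne_top_of_le_coe hv
  have hPv : (conj h v).toReal ≤ lam := by
    have hcoe : conj h v = (((conj h v).toReal : ℝ) : EReal) :=
      (EReal.coe_toReal hvne (ne_bot_of_nonneg (conj_nonneg h0 v))).symm
    rw [hcoe, EReal.coe_le_coe_iff] at hv
    exact hv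
  rw [phi_of_psi hlam h0 hge hvne, max_eq_left (by linarith)]
  simp

lemma subgrad_nonneg_of_pos {f : ℝ → EReal} (hevenf : ∀ y, f (-y) = f y)
    (hgef : ∀ y, 0 ≤ f y) {x d : ℝ} (hx : 0 < x) (hd : x ∈ subdiff f d)
    (hfd : f d ≠ ⊤) : 0 ≤ d := by
  have hfnd : f (-d) ≠ ⊤ := by rw [hevenf d]; exact hfd
  have hre := subdiff_real_ineq hd hgef (y := -d) hfnd hfd
  rw [hevenf d] at hre
  nlinarith

lemma psi_even (heven : ∀ x : ℝ, h (-x) = h x) (v : ℝ) : conj h (-v) = conj h v :=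
  conj_even heven v

lemma phi_even (heven : ∀ x : ℝ, h (-x) = h x) (v : ℝ) :
    conj (gfun lam h) (-v) = conj (gfun lam h) v :=
  conj_even (gfun_even heven) v

lemma phi_tau_eq_zero (hlam : 0 < lam) (h0 : h 0 = 0) (hge : ∀ x : ℝ, 0 ≤ h x)
    (hdom : ∃ x : ℝ, 0 < x ∧ h x ≠ ⊤) :
    conj (gfun lam h) (tau lam h) = 0 :=
  phi_zero_of_le hlam h0 hge (psi_tau_le hlam h0 hge hdom)

lemma d_ge_tau (hlam : 0 < lam) (h0 : h 0 = 0) (hge : ∀ x : ℝ, 0 ≤ h x)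
    (hdom : ∃ x : ℝ, 0 < x ∧ h x ≠ ⊤) (heven : ∀ x : ℝ, h (-x) = h x)
    {x d : ℝ} (hx : 0 < x) (hd : x ∈ subdiff (conj (gfun lam h)) d) :
    tau lam h ≤ d := by
  have hφge := phi_nonneg (lam := lam) h0
  have hφd : conj (gfun lam h) d ≠ ⊤ := subdiff_fx_ne_top hd (phi_zero hlam h0 hge)
  have hd0 : 0 ≤ d := subgrad_nonneg_of_pos (phi_even heven) hφge hx hd hφd
  by_contra hc
  push_neg at hc
  have hφdval : conj (gfun lam h) d = 0 :=
    phi_zero_of_le hlam h0 hge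
      ((le_tau_iff hlam h0 hge hdom heven).2 (by rw [abs_of_nonneg hd0]; exact hc.le))
  have hφτ : conj (gfun lam h) (tau lam h) = 0 := phi_tau_eq_zero hlam h0 hge hdom
  have hre := subdiff_real_ineq hd hφge (y := tau lam h)
    (by rw [hφτ]; exact EReal.zero_lt_top.ne) hφd
  rw [hφdval, hφτ] at hre
  simp only [EReal.toReal_zero] at hre
  nlinarith

lemma tau_pos_of_psi_tau (hlam : 0 < lam) (h0 : h 0 = 0) (hge : ∀ x : ℝ, 0 ≤ h x)
    (hdom : ∃ x : ℝ, 0 < x ∧ h x ≠ ⊤)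
    (hψτ : conj h (tau lam h) = (lam : EReal)) : 0 < tau lam h := by
  rcases eq_or_lt_of_le (tau_nonneg hlam h0 hge hdom) with hτ0 | hτ0
  · exfalso
    rw [← hτ0, conj_zero h0 hge] at hψτ
    have : lam = 0 := by exact_mod_cast hψτ.symm
    linarith
  · exact hτ0

lemma mu_le_slope (hlam : 0 < lam) (h0 : h 0 = 0) (hge : ∀ x : ℝ, 0 ≤ h x)
    (hdom : ∃ x : ℝ, 0 < x ∧ h x ≠ ⊤) (heven : ∀ x : ℝ, h (-x) = h x)
    {e s : ℝ} (he : tau lam h < e) (hpsie : conj h e ≠ ⊤)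
    (hψτ : conj h (tau lam h) = (lam : EReal))
    (hs : (conj h e).toReal - lam ≤ s * (e - tau lam h)) :
    mu lam h ≤ ((s : ℝ) : EReal) := by
  have hτpos := tau_pos_of_psi_tau hlam h0 hge hdom hψτ
  obtain ⟨d', _, hd'⟩ := exists_subgrad (conj_econvex hge) (conj_zero h0 hge)
    (conj_nonneg h0) (conj_even heven) hτpos he hpsie
  have hne : (subdiff (conj h) (tau lam h)).Nonempty := ⟨d', hd'⟩
  rw [mu, if_pos hne]
  refine sSup_le fun a ha => ?_
  obtain ⟨t, ⟨ht0, htmem⟩, rfl⟩ := ha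
  simp only []
  rw [EReal.coe_le_coe_iff]
  have hψτtop : conj h (tau lam h) ≠ ⊤ := by rw [hψτ]; exact EReal.coe_ne_top _
  have hre := subdiff_real_ineq htmem (conj_nonneg h0) (y := e) hpsie hψτtop
  have hψτr : (conj h (tau lam h)).toReal = lam := by rw [hψτ, EReal.toReal_coe]
  rw [hψτr] at hre
  nlinarith

/-- Case 1 : x = 0. -/
lemma caseA (hlam : 0 < lam) (h0 : h 0 = 0) (hge : ∀ x : ℝ, 0 ≤ h x)
    (hdom : ∃ x : ℝ, 0 < x ∧ h x ≠ ⊤) (heven : ∀ x : ℝ, h (-x) = h x) :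
    {d : ℝ | (0:ℝ) ∈ subdiff (conj (gfun lam h)) d} = Icc (-(tau lam h)) (tau lam h) := by
  have hφge := phi_nonneg (lam := lam) h0
  ext d
  simp only [Set.mem_setOf_eq, Set.mem_Icc]
  constructor
  · intro hd
    have h1 := hd 0
    rw [phi_zero hlam h0 hge] at h1
    simp only [mul_zero, zero_mul, EReal.coe_zero, add_zero] at h1
    have hφd0 : conj (gfun lam h) d = 0 := le_antisymm h1 (hφge d)
    have hψd : conj h d ≤ (lam : EReal) := by
      by_contra hcon
      push_neg at hcon
      rcases phi_cases hlam h0 hge d with ⟨_, h2⟩ | ⟨h2, h3⟩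
      · rw [h2] at hφd0; exact EReal.zero_lt_top.ne hφd0.symm
      · rw [h3] at hφd0
        have : max 0 ((conj h d).toReal - lam) = 0 := by exact_mod_cast hφd0
        have hPd : (conj h d).toReal ≤ lam := by
          have h4 := le_max_right (0:ℝ) ((conj h d).toReal - lam)
          rw [this] at h4
          linarith
        rw [h2] at hcon
        have : lam < (conj h d).toReal := by exact_mod_cast hcon
        linarith
    have := (le_tau_iff hlam h0 hge hdom heven).1 hψd
    exact abs_le.1 this
  · intro ⟨hd1, hd2⟩
    have hψd : conj h d ≤ (lam : EReal) :=
      (le_tau_iff hlam h0 hge hdom heven).2 (abs_le.2 ⟨hd1, hd2⟩)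
    have hφd : conj (gfun lam h) d = 0 := phi_zero_of_le hlam h0 hge hψd
    intro y
    rw [hφd, zero_add]
    calc ((0 * (y - d) : ℝ) : EReal) = 0 := by norm_cast; ring
      _ ≤ conj (gfun lam h) y := hφge y

/-- Case 2 : 0 < x < μ. -/
lemma caseB (hlam : 0 < lam) (h0 : h 0 = 0) (hge : ∀ x : ℝ, 0 ≤ h x)
    (hdom : ∃ x : ℝ, 0 < x ∧ h x ≠ ⊤) (heven : ∀ x : ℝ, h (-x) = h x)
    {x : ℝ} (hx : 0 < x) (hxmu : ((x:ℝ):EReal) < mu lam h) :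
    {d : ℝ | x ∈ subdiff (conj (gfun lam h)) d} = {tau lam h} := by
  have hφge := phi_nonneg (lam := lam) h0
  have hφτ0 : conj (gfun lam h) (tau lam h) = 0 := phi_tau_eq_zero hlam h0 hge hdom
  have hφτtop : conj (gfun lam h) (tau lam h) ≠ ⊤ := by
    rw [hφτ0]; exact EReal.zero_lt_top.ne
  ext d
  simp only [Set.mem_setOf_eq, Set.mem_singleton_iff]
  constructor
  · intro hd
    have hτled : tau lam h ≤ d := d_ge_tau hlam h0 hge hdom heven hx hd
    rcases eq_or_lt_of_le hτled with heq | hlt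
    · exact heq.symm
    exfalso
    have hφd : conj (gfun lam h) d ≠ ⊤ := subdiff_fx_ne_top hd (phi_zero hlam h0 hge)
    have hψd : conj h d ≠ ⊤ := psi_ne_top_of_phi hlam h0 hge hφd
    rcases eq_or_lt_of_le (psi_tau_le hlam h0 hge hdom) with hψτ | hψτlt
    · have hre := subdiff_real_ineq hd hφge (y := tau lam h) hφτtop hφd
      rw [hφτ0] at hre
      simp only [EReal.toReal_zero] at hre
      have hφdr : (conj (gfun lam h) d).toReal = max 0 ((conj h d).toReal - lam) :=
        phi_toReal hlam h0 hge hψd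
      have hs : (conj h d).toReal - lam ≤ x * (d - tau lam h) := by
        have := le_max_right (0:ℝ) ((conj h d).toReal - lam)
        rw [← hφdr] at this
        nlinarith
      exact absurd (mu_le_slope hlam h0 hge hdom heven hlt hψd hψτ hs) (not_le.2 hxmu)
    · exact hψd (psi_jump hlam h0 hge hdom hψτlt hlt)
  · rintro rfl
    refine mem_subdiff_of_reals hφτtop hφge fun e hφe => ?_
    have hφτr : (conj (gfun lam h) (tau lam h)).toReal = 0 := by rw [hφτ0]; simp
    rw [hφτr]
    have hψe : conj h e ≠ ⊤ := psi_ne_top_of_phi hlam h0 hge hφe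
    have hφer : (conj (gfun lam h) e).toReal = max 0 ((conj h e).toReal - lam) :=
      phi_toReal hlam h0 hge hψe
    rcases le_or_gt e (tau lam h) with he | he
    · have := le_max_left (0:ℝ) ((conj h e).toReal - lam)
      rw [← hφer] at this
      nlinarith
    · rcases eq_or_lt_of_le (psi_tau_le hlam h0 hge hdom) with hψτ | hψτlt
      · by_contra hcon
        push_neg at hcon
        have hs : (conj h e).toReal - lam ≤ x * (e - tau lam h) := by
          have := le_max_right (0:ℝ) ((conj h e).toReal - lam)
          rw [← hφer] at this
          nlinarith
        exact absurd (mu_le_slope hlam h0 hge hdom heven he hψe hψτ hs) (not_le.2 hxmu)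
      · exact absurd (psi_jump hlam h0 hge hdom hψτlt he) hψe

lemma subdiff_h_flip (h0 : h 0 = 0) (hge : ∀ x : ℝ, 0 ≤ h x)
    (hlsc : LowerSemicontinuous h) (hconv : EConvexOn h)
    (heven : ∀ x : ℝ, h (-x) = h x) {x : ℝ} (hhx : h x ≠ ⊤) :
    subdiff h x = {d : ℝ | x ∈ subdiff (conj h) d} := by
  have hFM : conj (conj h) = h := funext (fenchel_moreau h0 hge hlsc hconv heven)
  have hkey := subdiff_conj_flip (φ := conj h) (conj_zero h0 hge) (conj_nonneg h0)
    (conj_conj_conj h) (x := x) (by rw [hFM]; exact hhx)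
  rw [hFM] at hkey
  exact hkey

/-- Case 3 : x = μ. -/
lemma caseC (hlam : 0 < lam) (h0 : h 0 = 0) (hge : ∀ x : ℝ, 0 ≤ h x)
    (hlsc : LowerSemicontinuous h) (hconv : EConvexOn h)
    (hdom : ∃ x : ℝ, 0 < x ∧ h x ≠ ⊤) (heven : ∀ x : ℝ, h (-x) = h x)
    {x : ℝ} (hx : 0 < x) (hxmu : ((x:ℝ):EReal) = mu lam h) :
    {d : ℝ | x ∈ subdiff (conj (gfun lam h)) d} =
      {d : ℝ | tau lam h ≤ d ∧ ((d:ℝ):EReal) ≤ kappa lam h} := by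
  have hφge := phi_nonneg (lam := lam) h0
  have hψge := conj_nonneg (f := h) h0
  have hmu : mu lam h ≠ ⊤ := by rw [← hxmu]; exact EReal.coe_ne_top x
  obtain ⟨hcoe, hMge, hMmem, hub, hψτ⟩ := mu_spec hlam h0 hge hdom heven hmu
  have hMx : (mu lam h).toReal = x := by rw [← hxmu]; exact EReal.toReal_coe x
  rw [hMx] at hMmem hub
  have hψτtop : conj h (tau lam h) ≠ ⊤ := by rw [hψτ]; exact EReal.coe_ne_top _
  have hψτr : (conj h (tau lam h)).toReal = lam := by rw [hψτ, EReal.toReal_coe]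
  have hτ0 : 0 ≤ tau lam h := tau_nonneg hlam h0 hge hdom
  have hφτ0 : conj (gfun lam h) (tau lam h) = 0 := phi_tau_eq_zero hlam h0 hge hdom
  have hφτtop : conj (gfun lam h) (tau lam h) ≠ ⊤ := by
    rw [hφτ0]; exact EReal.zero_lt_top.ne
  have hhx : h x ≠ ⊤ := by
    have h1 := conj_le_of_subdiff hψge hMmem hψτtop
    rw [fenchel_moreau h0 hge hlsc hconv heven x] at h1
    exact er_ne_top_of_le_coe h1
  have hflip : subdiff h x = {d : ℝ | x ∈ subdiff (conj h) d} :=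
    subdiff_h_flip h0 hge hlsc hconv heven hhx
  have hκdef : kappa lam h =
      sSup ((fun v : ℝ => (v : EReal)) '' {v : ℝ | 0 ≤ v ∧ v ∈ subdiff h x}) := by
    rw [kappa, if_pos hmu, hMx]
  have hτx : tau lam h ∈ subdiff h x := by
    rw [hflip]; exact hMmem
  have hmono := conj_econvex (f := h) hge
  have hψeven := conj_even (f := h) heven
  ext d
  simp only [Set.mem_setOf_eq]
  constructor
  · intro hd
    have hτled : tau lam h ≤ d := d_ge_tau hlam h0 hge hdom heven hx hd
    have hφd : conj (gfun lam h) d ≠ ⊤ := subdiff_fx_ne_top hd (phi_zero hlam h0 hge)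
    have hψd : conj h d ≠ ⊤ := psi_ne_top_of_phi hlam h0 hge hφd
    have hψdge : lam ≤ (conj h d).toReal := by
      have h1 : conj h (tau lam h) ≤ conj h d := mono_even_convex hmono hψeven hτ0 hτled
      rw [hψτ, (EReal.coe_toReal hψd (ne_bot_of_nonneg (hψge d))).symm,
        EReal.coe_le_coe_iff] at h1
      exact h1
    have hφdr : (conj (gfun lam h) d).toReal = (conj h d).toReal - lam := by
      rw [phi_toReal hlam h0 hge hψd, max_eq_right (by linarith)]
    have hmemψ : x ∈ subdiff (conj h) d := by
      refine mem_subdiff_of_reals hψd hψge fun e hψe => ?_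
      have hre := subdiff_real_ineq hd hφge (y := e) (phi_ne_top_of_psi hlam h0 hge hψe) hφd
      rw [hφdr, phi_toReal hlam h0 hge hψe] at hre
      rcases le_or_gt lam ((conj h e).toReal) with hPe | hPe
      · rw [max_eq_right (by linarith)] at hre
        linarith
      · have hMre := subdiff_real_ineq hMmem hψge (y := e) hψe hψτtop
        rw [hψτr] at hMre
        have hreτ := subdiff_real_ineq hd hφge (y := tau lam h) hφτtop hφd
        rw [hφdr, hφτ0] at hreτ
        simp only [EReal.toReal_zero] at hreτ
        linarith
    have hdh : d ∈ subdiff h x := by rw [hflip]; exact hmemψ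
    exact ⟨hτled, by rw [hκdef]; exact le_sSup ⟨d, ⟨hτ0.trans hτled, hdh⟩, rfl⟩⟩
  · rintro ⟨hτd, hdκ⟩
    have hdh : d ∈ subdiff h x := by
      rcases lt_or_eq_of_le hdκ with hlt | heq
      · rw [hκdef] at hlt
        obtain ⟨a, ha, hda⟩ := lt_sSup_iff.1 hlt
        obtain ⟨t, ⟨ht0, htmem⟩, rfl⟩ := ha
        have hdt : d ≤ t := by
          simp only [] at hda
          exact_mod_cast hda.le
        exact subdiff_segment hτx htmem hτd hdt hge h0
      · refine sup_mem_subdiff hhx hge ⟨tau lam h, ⟨hτ0, hτx⟩, hτd⟩ fun r hr => ?_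
        have h1 : kappa lam h ≤ ((r:ℝ):EReal) := by
          rw [hκdef]
          refine sSup_le fun a ha => ?_
          obtain ⟨t, ⟨ht0, htmem⟩, rfl⟩ := ha
          simp only []
          exact_mod_cast hr t ht0 htmem
        rw [← heq, EReal.coe_le_coe_iff] at h1
        exact h1
    have hmemψ : x ∈ subdiff (conj h) d := by
      rw [hflip] at hdh
      exact hdh
    have hψd : conj h d ≠ ⊤ := subdiff_fx_ne_top hmemψ (conj_zero h0 hge)
    have hψdge : lam ≤ (conj h d).toReal := by
      have h1 : conj h (tau lam h) ≤ conj h d := mono_even_convex hmono hψeven hτ0 hτd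
      rw [hψτ, (EReal.coe_toReal hψd (ne_bot_of_nonneg (hψge d))).symm,
        EReal.coe_le_coe_iff] at h1
      exact h1
    refine mem_subdiff_of_reals (phi_ne_top_of_psi hlam h0 hge hψd) hφge fun e hφe => ?_
    have hψe : conj h e ≠ ⊤ := psi_ne_top_of_phi hlam h0 hge hφe
    have hre := subdiff_real_ineq hmemψ hψge (y := e) hψe hψd
    rw [phi_toReal hlam h0 hge hψd, phi_toReal hlam h0 hge hψe,
      max_eq_right (by linarith : (0:ℝ) ≤ (conj h d).toReal - lam)]
    have := le_max_right (0:ℝ) ((conj h e).toReal - lam)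
    linarith

/-- Case 4 : μ < x. -/
lemma caseD (hlam : 0 < lam) (h0 : h 0 = 0) (hge : ∀ x : ℝ, 0 ≤ h x)
    (hlsc : LowerSemicontinuous h) (hconv : EConvexOn h)
    (hdom : ∃ x : ℝ, 0 < x ∧ h x ≠ ⊤) (heven : ∀ x : ℝ, h (-x) = h x)
    {x : ℝ} (hx : 0 < x) (hmux : mu lam h < ((x:ℝ):EReal))
    (hGx : conj (conj (gfun lam h)) x ≠ ⊤) :
    {d : ℝ | x ∈ subdiff (conj (gfun lam h)) d} = subdiff h x := by
  have hφge := phi_nonneg (lam := lam) h0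
  have hψge := conj_nonneg (f := h) h0
  have hmu : mu lam h ≠ ⊤ := hmux.ne_top
  obtain ⟨hcoe, hMge, hMmem, hub, hψτ⟩ := mu_spec hlam h0 hge hdom heven hmu
  set M := (mu lam h).toReal with hMdef
  have hMx : M < x := by
    rw [hcoe, EReal.coe_lt_coe_iff] at hmux
    exact hmux
  have hψτtop : conj h (tau lam h) ≠ ⊤ := by rw [hψτ]; exact EReal.coe_ne_top _
  have hψτr : (conj h (tau lam h)).toReal = lam := by rw [hψτ, EReal.toReal_coe]
  have hτ0 : 0 ≤ tau lam h := tau_nonneg hlam h0 hge hdom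
  have hφτ0 : conj (gfun lam h) (tau lam h) = 0 := phi_tau_eq_zero hlam h0 hge hdom
  have hφτtop : conj (gfun lam h) (tau lam h) ≠ ⊤ := by
    rw [hφτ0]; exact EReal.zero_lt_top.ne
  have hhx : h x ≠ ⊤ := by
    have h1 : conj (conj h) x ≤ conj (conj (gfun lam h)) x :=
      conj_antitone (fun v => conj_antitone (h_le_gfun hlam h0) v) x
    rw [fenchel_moreau h0 hge hlsc hconv heven x] at h1
    intro ht
    rw [ht] at h1
    exact hGx (top_le_iff.1 h1)
  have hflip : subdiff h x = {d : ℝ | x ∈ subdiff (conj h) d} :=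
    subdiff_h_flip h0 hge hlsc hconv heven hhx
  have hmono := conj_econvex (f := h) hge
  have hψeven := conj_even (f := h) heven
  ext d
  simp only [Set.mem_setOf_eq]
  constructor
  · intro hd
    have hτled : tau lam h ≤ d := d_ge_tau hlam h0 hge hdom heven hx hd
    have hφd : conj (gfun lam h) d ≠ ⊤ := subdiff_fx_ne_top hd (phi_zero hlam h0 hge)
    have hψd : conj h d ≠ ⊤ := psi_ne_top_of_phi hlam h0 hge hφd
    have hψdge : lam ≤ (conj h d).toReal := by
      have h1 : conj h (tau lam h) ≤ conj h d := mono_even_convex hmono hψeven hτ0 hτled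
      rw [hψτ, (EReal.coe_toReal hψd (ne_bot_of_nonneg (hψge d))).symm,
        EReal.coe_le_coe_iff] at h1
      exact h1
    have hφdr : (conj (gfun lam h) d).toReal = (conj h d).toReal - lam := by
      rw [phi_toReal hlam h0 hge hψd, max_eq_right (by linarith)]
    have hmemψ : x ∈ subdiff (conj h) d := by
      refine mem_subdiff_of_reals hψd hψge fun e hψe => ?_
      have hre := subdiff_real_ineq hd hφge (y := e) (phi_ne_top_of_psi hlam h0 hge hψe) hφd
      rw [hφdr, phi_toReal hlam h0 hge hψe] at hre
      rcases le_or_gt lam ((conj h e).toReal) with hPe | hPe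
      · rw [max_eq_right (by linarith)] at hre
        linarith
      · have hMre := subdiff_real_ineq hMmem hψge (y := e) hψe hψτtop
        rw [hψτr] at hMre
        have heτ : e ≤ tau lam h := by
          have : conj h e ≤ (lam : EReal) := by
            rw [(EReal.coe_toReal hψe (ne_bot_of_nonneg (hψge e))).symm]
            exact_mod_cast hPe.le
          exact (le_abs_self e).trans ((le_tau_iff hlam h0 hge hdom heven).1 this)
        have hxe : x * (e - tau lam h) ≤ M * (e - tau lam h) := by nlinarith
        have hreτ := subdiff_real_ineq hd hφge (y := tau lam h) hφτtop hφd
        rw [hφdr, hφτ0] at hreτ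
        simp only [EReal.toReal_zero] at hreτ
        linarith
    rw [hflip]
    exact hmemψ
  · intro hdh
    have hmemψ : x ∈ subdiff (conj h) d := by rw [hflip] at hdh; exact hdh
    have hψd : conj h d ≠ ⊤ := subdiff_fx_ne_top hmemψ (conj_zero h0 hge)
    have hτd : tau lam h ≤ d := by
      by_contra hc
      push_neg at hc
      have h1 := subdiff_real_ineq hmemψ hψge (y := tau lam h) hψτtop hψd
      rw [hψτr] at h1
      have h2 := subdiff_real_ineq hMmem hψge (y := d) hψd hψτtop
      rw [hψτr] at h2
      nlinarith
    have hψdge : lam ≤ (conj h d).toReal := by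
      have h1 : conj h (tau lam h) ≤ conj h d := mono_even_convex hmono hψeven hτ0 hτd
      rw [hψτ, (EReal.coe_toReal hψd (ne_bot_of_nonneg (hψge d))).symm,
        EReal.coe_le_coe_iff] at h1
      exact h1
    refine mem_subdiff_of_reals (phi_ne_top_of_psi hlam h0 hge hψd) hφge fun e hφe => ?_
    have hψe : conj h e ≠ ⊤ := psi_ne_top_of_phi hlam h0 hge hφe
    have hre := subdiff_real_ineq hmemψ hψge (y := e) hψe hψd
    rw [phi_toReal hlam h0 hge hψd, phi_toReal hlam h0 hge hψe,
      max_eq_right (by linarith : (0:ℝ) ≤ (conj h d).toReal - lam)]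
    have := le_max_right (0:ℝ) ((conj h e).toReal - lam)
    linarith



lemma mu_nonneg (hlam : 0 < lam) (h0 : h 0 = 0) (hge : ∀ x : ℝ, 0 ≤ h x)
    (hdom : ∃ x : ℝ, 0 < x ∧ h x ≠ ⊤) (heven : ∀ x : ℝ, h (-x) = h x) :
    0 ≤ mu lam h := by
  rw [mu]
  split
  · next hne =>
      obtain ⟨t, ht0, htmem⟩ := subdiff_psi_tau_nonneg_elem hlam h0 hge hdom heven hne
      have hmem : ((t:ℝ):EReal) ∈
          ((fun x : ℝ => (x : EReal)) '' {x : ℝ | 0 ≤ x ∧ x ∈ subdiff (conj h) (tau lam h)}) :=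
        ⟨t, ⟨ht0, htmem⟩, rfl⟩
      calc (0:EReal) ≤ ((t:ℝ):EReal) := by exact_mod_cast ht0
        _ ≤ _ := le_sSup hmem
  · exact le_top

theorem subdiff_biconj_gfun (lam : ℝ) (h : ℝ → EReal) (hlam : 0 < lam)
    (h0 : h 0 = 0) (hge : ∀ x : ℝ, 0 ≤ h x)
    (hlsc : LowerSemicontinuous h) (hconv : EConvexOn h)
    (hdom : ∃ x : ℝ, 0 < x ∧ h x ≠ ⊤) (heven : ∀ x : ℝ, h (-x) = h x) :
    ∀ x : ℝ, conj (conj (gfun lam h)) x ≠ ⊤ →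
      ((x = 0 →
          subdiff (conj (conj (gfun lam h))) x = Icc (-(tau lam h)) (tau lam h)) ∧
       (0 < |x| → ((|x| : ℝ) : EReal) < mu lam h →
          subdiff (conj (conj (gfun lam h))) x = {Real.sign x * tau lam h}) ∧
       (((|x| : ℝ) : EReal) = mu lam h →
          subdiff (conj (conj (gfun lam h))) x =
            {d : ℝ | tau lam h ≤ Real.sign x * d ∧
              ((Real.sign x * d : ℝ) : EReal) ≤ kappa lam h}) ∧
       (mu lam h < ((|x| : ℝ) : EReal) →
          subdiff (conj (conj (gfun lam h))) x = subdiff h x)) := by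
  intro x hGx
  have hφ0 : conj (gfun lam h) 0 = 0 := phi_zero hlam h0 hge
  have hφge := phi_nonneg (lam := lam) h0
  have hφeven := phi_even (lam := lam) heven
  have hflipG : subdiff (conj (conj (gfun lam h))) x
      = {d : ℝ | x ∈ subdiff (conj (gfun lam h)) d} :=
    subdiff_conj_flip hφ0 hφge (conj_conj_conj (gfun lam h)) hGx
  refine ⟨?_, ?_, ?_, ?_⟩
  · intro hx0
    subst hx0
    rw [hflipG, caseA hlam h0 hge hdom heven]
  · intro hxabs hxmu
    rcases lt_trichotomy x 0 with hneg | hzero | hpos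
    · rw [abs_of_neg hneg] at hxmu
      rw [Real.sign_of_neg hneg, hflipG]
      have hcase := caseB hlam h0 hge hdom heven (x := -x) (by linarith) hxmu
      ext d
      simp only [Set.mem_setOf_eq, Set.mem_singleton_iff]
      rw [subdiff_neg hφeven]
      have h1 := Set.ext_iff.1 hcase (-d)
      simp only [Set.mem_setOf_eq, Set.mem_singleton_iff] at h1
      rw [h1]
      constructor <;> intro h2 <;> linarith
    · subst hzero; simp at hxabs
    · rw [abs_of_pos hpos] at hxmu
      rw [Real.sign_of_pos hpos, hflipG, caseB hlam h0 hge hdom heven hpos hxmu]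
      simp
  · intro hxmu
    have hxne : x ≠ 0 := by
      intro hx0
      subst hx0
      simp only [abs_zero, EReal.coe_zero] at hxmu
      exact mu_ne_zero hlam h0 hge hdom heven hxmu.symm
    rcases lt_or_gt_of_ne hxne with hneg | hpos
    · rw [abs_of_neg hneg] at hxmu
      rw [Real.sign_of_neg hneg, hflipG]
      have hcase := caseC hlam h0 hge hlsc hconv hdom heven (x := -x) (by linarith) hxmu
      ext d
      simp only [Set.mem_setOf_eq]
      rw [subdiff_neg hφeven]
      have h1 := Set.ext_iff.1 hcase (-d)
      simp only [Set.mem_setOf_eq] at h1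
      rw [h1]
      have hm : (-1 : ℝ) * d = -d := by ring
      rw [hm]
    · rw [abs_of_pos hpos] at hxmu
      rw [Real.sign_of_pos hpos, hflipG, caseC hlam h0 hge hlsc hconv hdom heven hpos hxmu]
      ext d
      simp only [Set.mem_setOf_eq, one_mul]
  · intro hmux
    rcases lt_trichotomy x 0 with hneg | hzero | hpos
    · rw [abs_of_neg hneg] at hmux
      have hGeven : ∀ v, conj (conj (gfun lam h)) (-v) = conj (conj (gfun lam h)) v :=
        conj_even (conj_even (gfun_even heven))
      have hGnx : conj (conj (gfun lam h)) (-x) ≠ ⊤ := by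
        rw [hGeven x]; exact hGx
      have hcase := caseD hlam h0 hge hlsc hconv hdom heven (x := -x) (by linarith) hmux hGnx
      rw [hflipG]
      ext d
      simp only [Set.mem_setOf_eq]
      rw [subdiff_neg hφeven]
      have h1 := Set.ext_iff.1 hcase (-d)
      simp only [Set.mem_setOf_eq] at h1
      rw [h1]
      exact (subdiff_neg heven).symm
    · subst hzero
      simp only [abs_zero, EReal.coe_zero] at hmux
      exact absurd hmux (not_lt.2 (mu_nonneg hlam h0 hge hdom heven))
    · rw [abs_of_pos hpos] at hmux
      rw [hflipG, caseD hlam h0 hge hlsc hconv hdom heven hpos hmux hGx]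


end Proofs
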